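/- For every sequence ω : ℤ → ℂ, all ξ, η ∈ ℂ, every m ∈ ℤ and every integer ℓ ≥ 1, the Toeplitz determinants satisfy: A(m, ℓ, S_ξω)·A(m, ℓ, S_ηω) = A(m, ℓ, ω)·A(m, ℓ, S_ξS_ηω) + A(m+1, ℓ+1, ω)·A(m−1, ℓ−1, S_ξS_ηω). -/

import Mathlib

/-- The `ℓ×ℓ` Toeplitz determinant `A(m,ℓ,ω) = det(ω(m−a+b))_{a,b=1,…,ℓ}`
(equal to `1` when `ℓ = 0`). -/
noncomputable def Toep (m : ℤ) (ℓ : ℕ) (ω : ℤ → ℂ) : ℂ :=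
  Matrix.det (Matrix.of fun a b : Fin ℓ => ω (m - (a : ℤ) + (b : ℤ)))

/-- The shifted sequence `(S_ζ ω)(m) = ω(m+1) − ζ·ω(m)`. -/
def Sh (ζ : ℂ) (ω : ℤ → ℂ) : ℤ → ℂ := fun m => ω (m + 1) - ζ * ω m

set_option linter.unusedSectionVars false

namespace Stmt14Aux

open Matrix Polynomial Equiv

section CommRingPart

variable {R : Type*} [CommRing R]

lemma submatrix_updateRow_succ {p : ℕ} (M : Matrix (Fin (p+2)) (Fin (p+2)) R)
    (v : Fin (p+2) → R) (g : Fin (p+1) → Fin (p+2)) :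
    (M.updateRow 0 v).submatrix Fin.succ g = M.submatrix Fin.succ g := by
  ext a b
  simp [Matrix.updateRow_ne (Fin.succ_ne_zero a)]

lemma submatrix_updateRow_castSucc {p : ℕ} (M : Matrix (Fin (p+2)) (Fin (p+2)) R)
    (v : Fin (p+2) → R) (g : Fin (p+1) → Fin (p+2)) :
    (M.updateRow (Fin.last (p+1)) v).submatrix Fin.castSucc g = M.submatrix Fin.castSucc g := by
  ext a b
  simp [Matrix.updateRow_ne (Fin.castSucc_lt_last a).ne]

lemma adj_00 {p : ℕ} (M : Matrix (Fin (p+2)) (Fin (p+2)) R) :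
    adjugate M 0 0 = det (M.submatrix Fin.succ Fin.succ) := by
  rw [adjugate_apply, det_succ_row_zero, Finset.sum_eq_single 0]
  · simp [submatrix_updateRow_succ, Fin.succAbove_zero]
  · intro j _ hj
    simp [Pi.single_eq_of_ne hj]
  · simp

lemma adj_l0 {p : ℕ} (M : Matrix (Fin (p+2)) (Fin (p+2)) R) :
    adjugate M (Fin.last (p+1)) 0 = (-1)^(p+1) * det (M.submatrix Fin.succ Fin.castSucc) := by
  rw [adjugate_apply, det_succ_row_zero, Finset.sum_eq_single (Fin.last (p+1))]
  · simp [submatrix_updateRow_succ, Fin.succAbove_last, Fin.val_last]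
  · intro j _ hj
    simp [Pi.single_eq_of_ne hj]
  · simp

lemma adj_0l {p : ℕ} (M : Matrix (Fin (p+2)) (Fin (p+2)) R) :
    adjugate M 0 (Fin.last (p+1)) = (-1)^(p+1) * det (M.submatrix Fin.castSucc Fin.succ) := by
  rw [adjugate_apply, det_succ_row _ (Fin.last (p+1)), Finset.sum_eq_single 0]
  · simp [submatrix_updateRow_castSucc, Fin.succAbove_last, Fin.succAbove_zero, Fin.val_last]
  · intro j _ hj
    simp [Pi.single_eq_of_ne hj]
  · simp

lemma adj_ll {p : ℕ} (M : Matrix (Fin (p+2)) (Fin (p+2)) R) :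
    adjugate M (Fin.last (p+1)) (Fin.last (p+1))
      = det (M.submatrix Fin.castSucc Fin.castSucc) := by
  rw [adjugate_apply, det_succ_row _ (Fin.last (p+1)), Finset.sum_eq_single (Fin.last (p+1))]
  · have : ((-1 : R)) ^ ((Fin.last (p+1) : ℕ) + (Fin.last (p+1) : ℕ)) = 1 :=
      Even.neg_one_pow ⟨(p+1), by simp [Fin.val_last]⟩
    simp [submatrix_updateRow_castSucc, Fin.succAbove_last, this]
  · intro j _ hj
    simp [Pi.single_eq_of_ne hj]
  · simp

lemma updateColumn_comm' {p : ℕ} (M : Matrix (Fin p) (Fin p) R) {i j : Fin p} (hij : i ≠ j)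
    (u v : Fin p → R) :
    (M.updateCol i u).updateCol j v = (M.updateCol j v).updateCol i u := by
  ext a b
  simp only [updateCol_apply]
  rcases eq_or_ne b j with rfl | hbj <;> rcases eq_or_ne b i with rfl | hbi <;> simp_all

lemma det_updateColumn_finset_sum {p : ℕ} (M : Matrix (Fin p) (Fin p) R) (j : Fin p)
    {ι : Type*} (s : Finset ι) (v : ι → Fin p → R) :
    det (M.updateCol j (∑ k ∈ s, v k)) = ∑ k ∈ s, det (M.updateCol j (v k)) := by
  classical
  induction s using Finset.induction_on with
  | empty =>
      rw [Finset.sum_empty, Finset.sum_empty]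
      exact det_eq_zero_of_column_eq_zero j (fun i => by simp)
  | insert _ _ hk ih =>
      rw [Finset.sum_insert hk, Finset.sum_insert hk, det_updateCol_add, ih]

lemma vec_eq_sum_single {p : ℕ} (v : Fin p → R) :
    v = ∑ k, v k • (Pi.single k (1 : R) : Fin p → R) := by
  funext i
  simp [Finset.sum_apply, Pi.single_apply]

lemma zero_ne_last {p : ℕ} : (0 : Fin (p+2)) ≠ Fin.last (p+1) := by
  simp [Fin.ext_iff, Fin.val_last]

lemma det_double_single {p : ℕ} (i k : Fin (p+2)) :
    det (((1 : Matrix (Fin (p+2)) (Fin (p+2)) R).updateCol 0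
        (Pi.single i 1)).updateCol (Fin.last (p+1)) (Pi.single k 1))
      = (if i = 0 ∧ k = Fin.last (p+1) then 1 else 0)
        + (if i = Fin.last (p+1) ∧ k = 0 then -1 else 0) := by
  by_cases hk : k ≠ 0 ∧ k ≠ Fin.last (p+1)
  · rw [det_zero_of_column_eq hk.2 (fun a => ?_)]
    · simp [hk.1, hk.2, Ne.symm hk.1, Ne.symm hk.2]
    · simp [updateCol_apply, hk.1, hk.2, one_apply, Pi.single_apply]
  by_cases hi : i ≠ 0 ∧ i ≠ Fin.last (p+1)
  · rw [det_zero_of_column_eq (Ne.symm hi.1) (fun a => ?_)]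
    · simp [hi.1, hi.2, Ne.symm hi.1, Ne.symm hi.2]
    · simp [updateCol_apply, hi.1, hi.2, Ne.symm hi.2, zero_ne_last, one_apply,
        Pi.single_apply]
  push_neg at hk hi
  -- now i ∈ {0, last} and k ∈ {0, last}
  rcases em (i = 0) with hi0 | hi0
  · rcases em (k = 0) with hk0 | hk0
    · subst hi0; subst hk0
      rw [det_zero_of_column_eq zero_ne_last (fun a => ?_)]
      · simp [zero_ne_last, Ne.symm (zero_ne_last (p := p))]
      · simp [updateCol_apply, Ne.symm (zero_ne_last (p := p))]
    · have hkl : k = Fin.last (p+1) := hk hk0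
      subst hi0; subst hkl
      have : ((1 : Matrix (Fin (p+2)) (Fin (p+2)) R).updateCol 0
          (Pi.single 0 1)).updateCol (Fin.last (p+1)) (Pi.single (Fin.last (p+1)) 1)
          = 1 := by
        ext a b
        simp only [updateCol_apply]
        split_ifs <;> simp_all [one_apply, Pi.single_apply]
      rw [this, det_one]
      simp [Ne.symm (zero_ne_last (p := p)), zero_ne_last]
  · have hil : i = Fin.last (p+1) := hi hi0
    subst hil
    rcases em (k = 0) with hk0 | hk0
    · subst hk0
      have : ((1 : Matrix (Fin (p+2)) (Fin (p+2)) R).updateCol 0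
          (Pi.single (Fin.last (p+1)) 1)).updateCol (Fin.last (p+1)) (Pi.single 0 1)
          = (1 : Matrix (Fin (p+2)) (Fin (p+2)) R).submatrix id (swap 0 (Fin.last (p+1))) := by
        ext a b
        rcases eq_or_ne b (Fin.last (p+1)) with rfl | hbl
        · simp [updateCol_apply, swap_apply_right, one_apply, Pi.single_apply]
        · rcases eq_or_ne b 0 with rfl | hb0
          · simp [updateCol_apply, hbl, swap_apply_left, one_apply, Pi.single_apply]
          · simp [updateCol_apply, hbl, hb0, swap_apply_of_ne_of_ne hb0 hbl, one_apply]
      rw [this, det_permute', det_one, Perm.sign_swap zero_ne_last]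
      simp [zero_ne_last, Ne.symm (zero_ne_last (p := p))]
    · have hkl : k = Fin.last (p+1) := hk hk0
      subst hkl
      rw [det_zero_of_column_eq zero_ne_last (fun a => ?_)]
      · simp [zero_ne_last, Ne.symm (zero_ne_last (p := p))]
      · simp [updateCol_apply, Ne.symm (zero_ne_last (p := p))]

lemma det_corners {p : ℕ} (B : Matrix (Fin (p+2)) (Fin (p+2)) R) :
    det (((1 : Matrix (Fin (p+2)) (Fin (p+2)) R).updateCol 0
        (fun i => B i 0)).updateCol (Fin.last (p+1)) (fun i => B i (Fin.last (p+1))))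
      = B 0 0 * B (Fin.last (p+1)) (Fin.last (p+1))
        - B (Fin.last (p+1)) 0 * B 0 (Fin.last (p+1)) := by
  have hne : (0 : Fin (p+2)) ≠ Fin.last (p+1) := zero_ne_last
  rw [show (fun i => B i (Fin.last (p+1))) = ∑ k, B k (Fin.last (p+1)) •
      (Pi.single k (1:R) : Fin (p+2) → R) from vec_eq_sum_single _]
  rw [det_updateColumn_finset_sum]
  have step1 : ∀ k : Fin (p+2),
      det (((1 : Matrix (Fin (p+2)) (Fin (p+2)) R).updateCol 0
          (fun i => B i 0)).updateCol (Fin.last (p+1))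
            (B k (Fin.last (p+1)) • (Pi.single k (1:R) : Fin (p+2) → R)))
        = B k (Fin.last (p+1)) *
          ((if k = Fin.last (p+1) then B 0 0 else 0)
            - (if k = 0 then B (Fin.last (p+1)) 0 else 0)) := by
    intro k
    rw [det_updateCol_smul]
    congr 1
    rw [updateColumn_comm' _ hne]
    rw [show (fun i => B i 0) = ∑ i, B i 0 • (Pi.single i (1:R) : Fin (p+2) → R) from
      vec_eq_sum_single _]
    rw [det_updateColumn_finset_sum]
    have step2 : ∀ i : Fin (p+2),
        det (((1 : Matrix (Fin (p+2)) (Fin (p+2)) R).updateCol (Fin.last (p+1))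
            (Pi.single k 1)).updateCol 0 (B i 0 • (Pi.single i (1:R) : Fin (p+2) → R)))
          = B i 0 * ((if i = 0 ∧ k = Fin.last (p+1) then 1 else 0)
            + (if i = Fin.last (p+1) ∧ k = 0 then -1 else 0)) := by
      intro i
      rw [det_updateCol_smul, ← updateColumn_comm' _ hne, det_double_single]
    simp only [step2]
    simp only [mul_add, Finset.sum_add_distrib, mul_ite, mul_one, mul_zero, mul_neg, ite_and]
    rw [Finset.sum_ite_eq' Finset.univ (0 : Fin (p+2)), Finset.sum_ite_eq' Finset.univ
      (Fin.last (p+1))]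
    simp only [sub_eq_add_neg, Finset.mem_univ, if_true]
    split_ifs <;> simp
  simp only [step1]
  simp only [mul_sub, mul_ite, mul_zero, Finset.sum_sub_distrib]
  rw [Finset.sum_ite_eq' Finset.univ (Fin.last (p+1)), Finset.sum_ite_eq' Finset.univ
    (0 : Fin (p+2))]
  simp [mul_comm]

lemma det_E {p : ℕ} (M : Matrix (Fin (p+2)) (Fin (p+2)) R) :
    det ((M.updateCol 0 (Pi.single 0 1)).updateCol (Fin.last (p+1))
        (Pi.single (Fin.last (p+1)) 1))
      = det (M.submatrix (fun k : Fin p => k.succ.castSucc) (fun k : Fin p => k.succ.castSucc)) := by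
  set E := (M.updateCol 0 (Pi.single 0 1)).updateCol (Fin.last (p+1))
      (Pi.single (Fin.last (p+1)) 1) with hE
  have hcol0 : ∀ i, E i 0 = (Pi.single 0 1 : Fin (p+2) → R) i := by
    intro i
    rw [hE, updateCol_apply, if_neg zero_ne_last, updateCol_apply, if_pos rfl]
  rw [det_succ_column_zero, Finset.sum_eq_single 0]
  · rw [hcol0, Fin.succAbove_zero]
    simp only [Fin.val_zero, pow_zero, Pi.single_eq_same, one_mul]
    -- now expand along last column of E.submatrix succ succ
    rw [det_succ_column _ (Fin.last p), Finset.sum_eq_single (Fin.last p)]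
    · have hentry : (E.submatrix Fin.succ Fin.succ) (Fin.last p) (Fin.last p) = 1 := by
        simp [hE, submatrix_apply, Fin.succ_last, updateCol_apply]
      rw [hentry]
      have hsign : ((-1:R)) ^ ((Fin.last p : ℕ) + (Fin.last p : ℕ)) = 1 :=
        Even.neg_one_pow ⟨(p : ℕ), by simp [Fin.val_last]⟩
      rw [hsign, Fin.succAbove_last]
      rw [one_mul, one_mul]
      congr 1
      ext a b
      have hb1 : (b.succ.castSucc : Fin (p+2)) ≠ 0 := by simp [Fin.ext_iff]
      have hb2 : (b.succ.castSucc : Fin (p+2)) ≠ Fin.last (p+1) := (Fin.castSucc_lt_last _).ne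
      simp [hE, submatrix_apply, updateCol_apply, Fin.succ_castSucc, hb1, hb2,
        Fin.succ_ne_zero, -Fin.castSucc_succ]
    · intro a _ ha
      have : (E.submatrix Fin.succ Fin.succ) a (Fin.last p) = 0 := by
        have hne : Fin.succ a ≠ Fin.last (p+1) := by
          rw [← Fin.succ_last]; exact fun h => ha (Fin.succ_injective _ h)
        simp [hE, submatrix_apply, Fin.succ_last, updateCol_apply, Pi.single_apply, hne]
      rw [this]; ring
    · simp
  · intro i _ hi
    rw [hcol0, Pi.single_eq_of_ne hi]
    ring
  · simp

lemma dodgson_aux {p : ℕ} (M : Matrix (Fin (p+2)) (Fin (p+2)) R) :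
    det M * (det (M.submatrix Fin.succ Fin.succ) * det (M.submatrix Fin.castSucc Fin.castSucc)
      - det (M.submatrix Fin.succ Fin.castSucc) * det (M.submatrix Fin.castSucc Fin.succ))
    = det M * (det M *
        det (M.submatrix (fun k : Fin p => k.succ.castSucc) (fun k : Fin p => k.succ.castSucc))) := by
  classical
  have hne : (0 : Fin (p+2)) ≠ Fin.last (p+1) := zero_ne_last
  set B := adjugate M with hB
  set C := ((1 : Matrix (Fin (p+2)) (Fin (p+2)) R).updateCol 0
      (fun i => B i 0)).updateCol (Fin.last (p+1)) (fun i => B i (Fin.last (p+1))) with hC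
  have hCl : ∀ k, C k (Fin.last (p+1)) = B k (Fin.last (p+1)) := by
    intro k; rw [hC, updateCol_apply, if_pos rfl]
  have hC0 : ∀ k, C k 0 = B k 0 := by
    intro k; rw [hC, updateCol_apply, if_neg zero_ne_last, updateCol_apply, if_pos rfl]
  have hCmid : ∀ k j, j ≠ 0 → j ≠ Fin.last (p+1) → C k j = (1 : Matrix (Fin (p+2)) (Fin (p+2)) R) k j := by
    intro k j h0 hl; rw [hC, updateCol_apply, if_neg hl, updateCol_apply, if_neg h0]
  have hMC : M * C = (M.updateCol 0 (det M • (Pi.single 0 1 : Fin (p+2) → R))).updateCol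
      (Fin.last (p+1)) (det M • (Pi.single (Fin.last (p+1)) 1 : Fin (p+2) → R)) := by
    ext i j
    rcases eq_or_ne j (Fin.last (p+1)) with rfl | hjl
    · rw [mul_apply]
      simp only [hCl]
      rw [show ∑ k, M i k * B k (Fin.last (p+1)) = (M * B) i (Fin.last (p+1)) from
        (mul_apply).symm, hB, mul_adjugate]
      rw [updateCol_apply, if_pos rfl]
      simp [Pi.single_apply, one_apply]
    rcases eq_or_ne j 0 with rfl | hj0
    · rw [mul_apply]
      simp only [hC0]
      rw [show ∑ k, M i k * B k 0 = (M * B) i 0 from (mul_apply).symm, hB, mul_adjugate]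
      rw [updateCol_apply, if_neg hjl, updateCol_apply, if_pos rfl]
      simp [Pi.single_apply, one_apply]
    · rw [mul_apply]
      have : ∀ k, M i k * C k j = M i k * (1 : Matrix (Fin (p+2)) (Fin (p+2)) R) k j := by
        intro k; rw [hCmid k j hj0 hjl]
      rw [Finset.sum_congr rfl (fun k _ => this k),
        show ∑ k, M i k * (1 : Matrix (Fin (p+2)) (Fin (p+2)) R) k j
            = (M * (1 : Matrix (Fin (p+2)) (Fin (p+2)) R)) i j from (mul_apply).symm, mul_one]
      rw [updateCol_apply, if_neg hjl, updateCol_apply, if_neg hj0]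
  have hdetMC : det (M * C) = det M * det C := det_mul _ _
  have hdetD : det (M * C) = det M * (det M *
      det (M.submatrix (fun k : Fin p => k.succ.castSucc) (fun k : Fin p => k.succ.castSucc))) := by
    rw [hMC, det_updateCol_smul, updateColumn_comm' _ hne, det_updateCol_smul,
      updateColumn_comm' _ (Ne.symm hne), det_E]
  have hdetC : det C = det (M.submatrix Fin.succ Fin.succ) * det (M.submatrix Fin.castSucc Fin.castSucc)
      - det (M.submatrix Fin.succ Fin.castSucc) * det (M.submatrix Fin.castSucc Fin.succ) := by
    rw [hC, det_corners, hB, adj_00, adj_ll, adj_l0, adj_0l]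
    have hsq : ((-1 : R)^(p+1)) * ((-1 : R)^(p+1)) = 1 := by
      rw [← pow_add]; exact Even.neg_one_pow ⟨p+1, rfl⟩
    linear_combination (-(det (M.submatrix Fin.succ Fin.castSucc) *
      det (M.submatrix Fin.castSucc Fin.succ))) * hsq
  rw [← hdetC, ← hdetMC, hdetD]

lemma dodgson {p : ℕ} (M : Matrix (Fin (p+2)) (Fin (p+2)) ℂ) :
    det (M.submatrix Fin.succ Fin.succ) * det (M.submatrix Fin.castSucc Fin.castSucc)
      - det (M.submatrix Fin.succ Fin.castSucc) * det (M.submatrix Fin.castSucc Fin.succ)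
    = det M * det (M.submatrix (fun k : Fin p => k.succ.castSucc)
        (fun k : Fin p => k.succ.castSucc)) := by
  set N : Matrix (Fin (p+2)) (Fin (p+2)) (Polynomial ℂ) := charmatrix (-M) with hN
  have hNdet : det N ≠ 0 := by
    have h1 : det N = (-M).charpoly := rfl
    rw [h1]
    exact (charpoly_monic _).ne_zero
  have key := mul_left_cancel₀ hNdet (dodgson_aux N)
  have hmap : N.map (Polynomial.evalRingHom (0:ℂ)) = M := by
    ext i j
    rcases eq_or_ne i j with rfl | h
    · simp [hN, charmatrix_apply_eq]
    · simp [hN, charmatrix_apply_ne _ _ _ h]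
  have conv : ∀ {q : ℕ} (f g : Fin q → Fin (p+2)),
      Polynomial.eval (0:ℂ) (det (N.submatrix f g)) = det (M.submatrix f g) := by
    intro q f g
    rw [show Polynomial.eval (0:ℂ) (det (N.submatrix f g))
        = ((Polynomial.evalRingHom (0:ℂ)) (det (N.submatrix f g))) from rfl,
      RingHom.map_det, RingHom.mapMatrix_apply, ← submatrix_map, hmap]
  have convfull : Polynomial.eval (0:ℂ) (det N) = det M := by
    rw [show Polynomial.eval (0:ℂ) (det N) = ((Polynomial.evalRingHom (0:ℂ)) (det N)) from rfl,
      RingHom.map_det, RingHom.mapMatrix_apply, hmap]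
  have := congrArg (Polynomial.eval (0:ℂ)) key
  simpa [Polynomial.eval_mul, Polynomial.eval_sub, conv, convfull] using this

end CommRingPart

def Sh' (ζ : ℂ) (ω : ℤ → ℂ) : ℤ → ℂ := fun m => ω (m + 1) - ζ * ω m

noncomputable def Tmat (m : ℤ) (p : ℕ) (ω : ℤ → ℂ) : Matrix (Fin p) (Fin p) ℂ :=
  Matrix.of fun a b => ω (m - (a : ℤ) + (b : ℤ))

def shm (p : ℕ) : Matrix (Fin p) (Fin p) ℂ :=
  Matrix.of fun a b => if (a : ℕ) + 1 = (b : ℕ) then 1 else 0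

noncomputable def Lm (ζ : ℂ) (p : ℕ) : Matrix (Fin p) (Fin p) ℂ := 1 - ζ • shm p

lemma shm_mul {p : ℕ} (X : Matrix (Fin p) (Fin p) ℂ) (a b : Fin p) :
    (shm p * X) a b = if h : (a : ℕ) + 1 < p then X ⟨(a : ℕ) + 1, h⟩ b else 0 := by
  rw [mul_apply]
  rcases Nat.lt_or_ge ((a : ℕ) + 1) p with h | h
  · rw [dif_pos h, Finset.sum_eq_single (⟨(a : ℕ) + 1, h⟩ : Fin p)]
    · simp [shm]
    · intro c _ hc
      have : ¬((a : ℕ) + 1 = (c : ℕ)) := fun hh => hc (by ext; simp [hh.symm])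
      simp [shm, this]
    · simp
  · rw [dif_neg (not_lt.2 h)]
    apply Finset.sum_eq_zero
    intro c _
    have hc := c.isLt
    have : ¬((a : ℕ) + 1 = (c : ℕ)) := by omega
    simp [shm, this]

lemma mul_shm {p : ℕ} (X : Matrix (Fin p) (Fin p) ℂ) (a b : Fin p) :
    (X * shm p) a b = if h : 0 < (b : ℕ) then X a ⟨(b : ℕ) - 1, by omega⟩ else 0 := by
  rw [mul_apply]
  rcases Nat.eq_zero_or_pos (b : ℕ) with h | h
  · rw [dif_neg (by omega)]
    apply Finset.sum_eq_zero
    intro c _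
    have : ¬((c : ℕ) + 1 = (b : ℕ)) := by omega
    simp [shm, this]
  · rw [dif_pos h, Finset.sum_eq_single (⟨(b : ℕ) - 1, by omega⟩ : Fin p)]
    · simp only [shm, of_apply]
      rw [if_pos (show ((b : ℕ) - 1) + 1 = (b : ℕ) by omega)]
      ring
    · intro c _ hc
      have : ¬((c : ℕ) + 1 = (b : ℕ)) := fun hh => hc (by ext; simp; omega)
      simp [shm, this]
    · simp

lemma Lm_mul_apply {p : ℕ} (ζ : ℂ) (X : Matrix (Fin p) (Fin p) ℂ) (a b : Fin p) :
    (Lm ζ p * X) a b = X a b - ζ * (shm p * X) a b := by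
  rw [Lm, sub_mul, one_mul, smul_mul_assoc]
  simp

lemma mul_Lm_apply {p : ℕ} (ζ : ℂ) (X : Matrix (Fin p) (Fin p) ℂ) (a b : Fin p) :
    (X * Lm ζ p) a b = X a b - ζ * (X * shm p) a b := by
  rw [Lm, mul_sub, mul_one, mul_smul_comm]
  simp

lemma det_Lm {p : ℕ} (ζ : ℂ) : det (Lm ζ p) = 1 := by
  have h : (Lm ζ p).BlockTriangular id := by
    intro i j hij
    have h1 : i ≠ j := by intro hh; subst hh; exact lt_irrefl _ hij
    have h2 : ¬((i : ℕ) + 1 = (j : ℕ)) := by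
      have : (j : ℕ) < (i : ℕ) := hij
      omega
    simp [Lm, Matrix.sub_apply, Matrix.smul_apply, one_apply, shm, h1, h2]
  rw [det_of_upperTriangular h]
  apply Finset.prod_eq_one
  intro i _
  simp [Lm, Matrix.sub_apply, Matrix.smul_apply, one_apply, shm]

section Appl

variable (ω : ℤ → ℂ) (ξ η : ℂ) (m : ℤ) (n : ℕ)

lemma E1 : (Lm ξ (n+2) * (Tmat (m+1) (n+2) ω * Lm η (n+2))).submatrix Fin.succ Fin.succ
    = Lm ξ (n+1) * Tmat m (n+1) (Sh' η ω) := by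
  ext a b
  have ha' := a.isLt
  have hb' := b.isLt
  simp only [submatrix_apply, Lm_mul_apply, mul_Lm_apply, shm_mul, mul_shm, Tmat, of_apply,
    Sh', Fin.val_succ, Nat.add_sub_cancel]
  split_ifs <;> first
    | (exfalso; omega)
    | (push_cast; ring_nf)

lemma E2 : (Lm ξ (n+2) * (Tmat (m+1) (n+2) ω * Lm η (n+2))).submatrix Fin.castSucc Fin.castSucc
    = Tmat m (n+1) (Sh' ξ ω) * Lm η (n+1) := by
  ext a b
  have ha' := a.isLt
  have hb' := b.isLt
  simp only [submatrix_apply, Lm_mul_apply, mul_Lm_apply, shm_mul, mul_shm, Tmat, of_apply,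
    Sh', Fin.val_succ, Fin.coe_castSucc, Nat.add_sub_cancel]
  split_ifs <;> first
    | (exfalso; omega)
    | (push_cast; ring_nf)

lemma E3 : (Lm ξ (n+2) * (Tmat (m+1) (n+2) ω * Lm η (n+2))).submatrix Fin.succ Fin.castSucc
    = Lm ξ (n+1) * (Tmat m (n+1) ω * Lm η (n+1)) := by
  ext a b
  have ha' := a.isLt
  have hb' := b.isLt
  simp only [submatrix_apply, Lm_mul_apply, mul_Lm_apply, shm_mul, mul_shm, Tmat, of_apply,
    Sh', Fin.val_succ, Fin.coe_castSucc, Nat.add_sub_cancel]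
  split_ifs <;> first
    | (exfalso; omega)
    | (push_cast; ring_nf)

lemma E4 : (Lm ξ (n+2) * (Tmat (m+1) (n+2) ω * Lm η (n+2))).submatrix Fin.castSucc Fin.succ
    = Tmat m (n+1) (Sh' ξ (Sh' η ω)) := by
  ext a b
  have ha' := a.isLt
  have hb' := b.isLt
  simp only [submatrix_apply, Lm_mul_apply, mul_Lm_apply, shm_mul, mul_shm, Tmat, of_apply,
    Sh', Fin.val_succ, Fin.coe_castSucc, Nat.add_sub_cancel]
  split_ifs <;> first
    | (exfalso; omega)
    | (push_cast; ring_nf)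

lemma E5 : (Lm ξ (n+2) * (Tmat (m+1) (n+2) ω * Lm η (n+2))).submatrix
      (fun k : Fin n => k.succ.castSucc) (fun k : Fin n => k.succ.castSucc)
    = Tmat (m-1) n (Sh' ξ (Sh' η ω)) := by
  ext a b
  have ha' := a.isLt
  have hb' := b.isLt
  simp only [submatrix_apply, Lm_mul_apply, mul_Lm_apply, shm_mul, mul_shm, Tmat, of_apply,
    Sh', Fin.val_succ, Fin.coe_castSucc, Nat.add_sub_cancel]
  split_ifs <;> first
    | (exfalso; omega)
    | (push_cast; ring_nf)

end Appl

end Stmt14Aux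

open Stmt14Aux Matrix in
theorem stmt14 (ω : ℤ → ℂ) (ξ η : ℂ) (m : ℤ) (ℓ : ℕ) (hℓ : 1 ≤ ℓ) :
    Toep m ℓ (Sh ξ ω) * Toep m ℓ (Sh η ω)
      = Toep m ℓ ω * Toep m ℓ (Sh ξ (Sh η ω))
        + Toep (m + 1) (ℓ + 1) ω * Toep (m - 1) (ℓ - 1) (Sh ξ (Sh η ω)) := by
  obtain ⟨n, rfl⟩ : ∃ n, ℓ = n + 1 := ⟨ℓ - 1, by omega⟩
  have hdj := dodgson (Lm ξ (n+2) * (Tmat (m+1) (n+2) ω * Lm η (n+2)))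
  rw [E1, E2, E3, E4, E5] at hdj
  simp only [det_mul, det_Lm, one_mul, mul_one] at hdj
  have toep_eq : ∀ (m' : ℤ) (p : ℕ) (ω' : ℤ → ℂ), Toep m' p ω' = det (Tmat m' p ω') :=
    fun _ _ _ => rfl
  have sh_eq : Sh = Sh' := rfl
  simp only [Nat.add_sub_cancel, toep_eq, sh_eq]
  linear_combination hdj
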